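/- Let T_1, T_2 be rooted trees with roots v_1, v_2 and branches L_1,...,L_{d_1} and R_1,...,R_{d_2} respectively, let T_0 be a tree with two distinguished vertices u, v, and let T be obtained by identifying v_1 with u and v_2 with v. Fix x>0 and d ≥ max{d_1,d_2}. Rearrange the branches L_1,...,L_{d_1},R_1,...,R_{d_2} as L'_1,...,L'_{d_1+d_2-d}, R'_1,...,R'_d so that τ(S(L'_1),x) ≥ ... ≥ τ(S(L'_{d_1+d_2-d}),x) ≥ τ(S(R'_1),x) ≥ ... ≥ τ(S(R'_d),x), and let T' be built analogously from the rearranged branches. If M_{10}(S(T_0),x) ≤ M_{01}(S(T_0),x), then M(S(T),x) ≥ M(S(T'),x). -/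

import Mathlib

/-- A rooted tree: a root node together with a list of branches (rooted subtrees). -/
inductive RTree : Type
  | node : List RTree → RTree

namespace RTree

/-- Auxiliary fold: from the list of pairs `(M0 Tᵢ x, M Tᵢ x)` of the branches,
compute `(∏ᵢ M(Tᵢ,x), Σⱼ M0(Tⱼ,x) ∏_{i≠j} M(Tᵢ,x))`. -/
def comb : List (ℝ × ℝ) → ℝ × ℝ
  | [] => (1, 0)
  | (m0, m) :: rest =>
    let pr := comb rest
    (m * pr.1, m0 * pr.1 + m * pr.2)

/-- `MM T x = (M₀(T,x), M₁(T,x))`: generating functions of matchings of `T`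
not saturating / saturating the root. -/
def MM : RTree → ℝ → ℝ × ℝ
  | .node ts, x =>
    let pr := comb (ts.attach.map fun t =>
      let q := MM t.1 x
      (q.1, q.1 + q.2))
    (pr.1, x * pr.2)
  decreasing_by have := List.sizeOf_lt_of_mem t.2; simp only [RTree.node.sizeOf_spec]; omega

/-- Generating function of matchings not saturating the root. -/
def M0 (t : RTree) (x : ℝ) : ℝ := (MM t x).1

/-- Generating function of matchings saturating the root. -/
def M1 (t : RTree) (x : ℝ) : ℝ := (MM t x).2

/-- The matching generating function `M(T,x) = M₀(T,x) + M₁(T,x)`. -/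
def M (t : RTree) (x : ℝ) : ℝ := M0 t x + M1 t x

/-- `τ(T,x) = M₀(T,x)/M(T,x)`. -/
noncomputable def tau (t : RTree) (x : ℝ) : ℝ := M0 t x / M t x

/-- The subdivision tree: insert a new vertex in every edge. -/
def subdiv : RTree → RTree
  | .node ts => .node (ts.attach.map fun t => .node [subdiv t.1])
  decreasing_by have := List.sizeOf_lt_of_mem t.2; simp only [RTree.node.sizeOf_spec]; omega

/-- Number of vertices. -/
def order : RTree → ℕ
  | .node ts => 1 + (ts.attach.map fun t => order t.1).sum
  decreasing_by have := List.sizeOf_lt_of_mem t.2; simp only [RTree.node.sizeOf_spec]; omega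

end RTree

namespace RTree

/-- Attach a list of extra branches at the root. -/
def attachB : RTree → List RTree → RTree
  | .node ts, bs => .node (ts ++ bs)

/-- Modify the `i`-th entry of a list. -/
def listModify {α : Type*} (f : α → α) : ℕ → List α → List α
  | _, [] => []
  | 0, a :: l => f a :: l
  | n + 1, a :: l => a :: listModify f n l

/-- Apply `f` to the subtree located at a given position (list of child indices). -/
def modifyAt (f : RTree → RTree) : List ℕ → RTree → RTree
  | [], t => f t
  | i :: p, .node ts => .node (listModify (modifyAt f p) i ts)

/-- A position (list of child indices) is valid in a tree. -/
def ValidPos : List ℕ → RTree → Prop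
  | [], _ => True
  | i :: p, .node ts => ∃ h : i < ts.length, ValidPos p (ts.get ⟨i, h⟩)

/-- For a tree with its root `u` and a second marked vertex `v` at position `p`,
`MM2 p T x = ((M₀₀, M₀₁), (M₁₀, M₁₁))`, the generating functions of matchings of
`T` saturating neither `u` nor `v`, only `v`, only `u`, or both, respectively. -/
def MM2 : List ℕ → RTree → ℝ → (ℝ × ℝ) × (ℝ × ℝ)
  | [], t, x => ((M0 t x, 0), (0, M1 t x))
  | i :: p, .node ts, x =>
    if h : i < ts.length then
      let q := MM2 p (ts.get ⟨i, h⟩) x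
      let os : RTree := .node (ts.eraseIdx i)
      let P0 := M0 os x
      let P1 := M1 os x
      ((P0 * (q.1.1 + q.2.1), P0 * (q.1.2 + q.2.2)),
        (x * P0 * q.1.1 + P1 * (q.1.1 + q.2.1),
          x * P0 * q.1.2 + P1 * (q.1.2 + q.2.2)))
    else ((0, 0), (0, 0))

/-- The position in the subdivision tree corresponding to a position in the tree. -/
def subdivPos (p : List ℕ) : List ℕ := p.flatMap fun i => [i, 0]

end RTree


namespace RTree

/-! ### Auxiliary lemmas for `comb` -/

theorem comb_cons (a : ℝ × ℝ) (l : List (ℝ × ℝ)) :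
    comb (a :: l) = (a.2 * (comb l).1, a.1 * (comb l).1 + a.2 * (comb l).2) := by
  rw [comb]

theorem comb_append (l₁ l₂ : List (ℝ × ℝ)) :
    comb (l₁ ++ l₂) =
      ((comb l₁).1 * (comb l₂).1,
        (comb l₁).2 * (comb l₂).1 + (comb l₁).1 * (comb l₂).2) := by
  induction l₁ with
  | nil => simp [comb]
  | cons a l ih =>
    simp only [List.cons_append, comb_cons, ih]
    rw [Prod.mk.injEq]
    constructor <;> ring

theorem comb_eraseIdx (l : List (ℝ × ℝ)) (i : ℕ) (h : i < l.length) :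
    (comb l).1 = (l.get ⟨i, h⟩).2 * (comb (l.eraseIdx i)).1 ∧
    (comb l).2 = (l.get ⟨i, h⟩).1 * (comb (l.eraseIdx i)).1
      + (l.get ⟨i, h⟩).2 * (comb (l.eraseIdx i)).2 := by
  induction l generalizing i with
  | nil => simp at h
  | cons a l ih =>
    cases i with
    | zero => simp [comb_cons]
    | succ n =>
      simp only [List.length_cons, Nat.succ_lt_succ_iff] at h
      obtain ⟨h1, h2⟩ := ih n h
      simp only [List.get_cons_succ, List.eraseIdx_cons_succ, comb_cons, h1, h2]
      constructor <;> ring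

theorem comb_pos (l : List (ℝ × ℝ)) (h : ∀ p ∈ l, 0 ≤ p.1 ∧ 0 < p.2) :
    0 < (comb l).1 ∧ 0 ≤ (comb l).2 := by
  induction l with
  | nil => simp [comb]
  | cons a l ih =>
    obtain ⟨h1, h2⟩ := h a (by simp)
    obtain ⟨h3, h4⟩ := ih fun p hp => h p (by simp [hp])
    rw [comb_cons]
    constructor <;> positivity

/-! ### Unfolding lemmas -/

theorem MM_node (ts : List RTree) (x : ℝ) :
    MM (node ts) x =
      ((comb (ts.map fun t => (M0 t x, M t x))).1,
        x * (comb (ts.map fun t => (M0 t x, M t x))).2) := by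
  rw [MM]; simp [List.attach_map_val, M0, M, M1]

theorem subdiv_node (ts : List RTree) :
    subdiv (node ts) = node (ts.map fun t => node [subdiv t]) := by
  rw [subdiv]; simp [List.attach_map_val]

theorem M0_node (ts : List RTree) (x : ℝ) :
    M0 (node ts) x = (comb (ts.map fun t => (M0 t x, M t x))).1 := by
  rw [M0, MM_node]

theorem M1_node (ts : List RTree) (x : ℝ) :
    M1 (node ts) x = x * (comb (ts.map fun t => (M0 t x, M t x))).2 := by
  rw [M1, MM_node]

/-! ### Positivity -/

theorem M_pos {x : ℝ} (hx : 0 < x) : ∀ t : RTree, 0 < M0 t x ∧ 0 ≤ M1 t x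
  | .node ts => by
    have key : ∀ p ∈ ts.map fun t => (M0 t x, M t x), 0 ≤ p.1 ∧ 0 < p.2 := by
      intro p hp
      simp only [List.mem_map] at hp
      obtain ⟨t, ht, rfl⟩ := hp
      have := M_pos hx t
      exact ⟨this.1.le, by simp only [M]; linarith [this.1, this.2]⟩
    have := comb_pos _ key
    constructor
    · simpa only [M0, MM_node] using this.1
    · simp only [M1, MM_node]
      exact mul_nonneg hx.le this.2
  decreasing_by have := List.sizeOf_lt_of_mem ht; simp only [RTree.node.sizeOf_spec]; omega

theorem M0_pos {x : ℝ} (hx : 0 < x) (t : RTree) : 0 < M0 t x := (M_pos hx t).1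
theorem M1_nonneg {x : ℝ} (hx : 0 < x) (t : RTree) : 0 ≤ M1 t x := (M_pos hx t).2
theorem Mt_pos {x : ℝ} (hx : 0 < x) (t : RTree) : 0 < M t x := by
  have := M_pos hx t; simp only [M]; linarith [this.1, this.2]

/-! ### Products/sums over branch lists -/

/-- `PP l x = ∏ M(b,x)` over the list. -/
noncomputable def PP (l : List RTree) (x : ℝ) : ℝ :=
  (comb (l.map fun b => (M0 b x, M b x))).1

/-- `QQ l x = Σⱼ M0(bⱼ,x) ∏_{i≠j} M(bᵢ,x)`. -/
noncomputable def QQ (l : List RTree) (x : ℝ) : ℝ :=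
  (comb (l.map fun b => (M0 b x, M b x))).2

theorem PP_pos {x : ℝ} (hx : 0 < x) (l : List RTree) : 0 < PP l x ∧ 0 ≤ QQ l x := by
  apply comb_pos
  intro p hp
  simp only [List.mem_map] at hp
  obtain ⟨t, ht, rfl⟩ := hp
  exact ⟨(M0_pos hx t).le, Mt_pos hx t⟩

theorem M0_node_append (ts bs : List RTree) (x : ℝ) :
    M0 (node (ts ++ bs)) x = M0 (node ts) x * PP bs x := by
  simp only [M0_node, List.map_append, comb_append, PP]

theorem M1_node_append (ts bs : List RTree) (x : ℝ) :
    M1 (node (ts ++ bs)) x = M1 (node ts) x * PP bs x + M0 (node ts) x * (x * QQ bs x) := by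
  simp only [M1_node, M0_node, List.map_append, comb_append, PP, QQ]
  ring

theorem map_eraseIdx {α β : Type*} (f : α → β) (l : List α) (i : ℕ) :
    (l.map f).eraseIdx i = (l.eraseIdx i).map f := by
  induction l generalizing i with
  | nil => rfl
  | cons a l ih =>
    cases i with
    | zero => rfl
    | succ n => simp [ih]

theorem M0_node_erase (ts : List RTree) (x : ℝ) (i : ℕ) (h : i < ts.length) :
    M0 (node ts) x = M (ts.get ⟨i, h⟩) x * M0 (node (ts.eraseIdx i)) x := by
  have h' : i < (ts.map fun t => (M0 t x, M t x)).length := by simpa using h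
  have := (comb_eraseIdx (ts.map fun t => (M0 t x, M t x)) i h').1
  simp only [M0_node, List.get_eq_getElem, List.getElem_map, map_eraseIdx] at this ⊢
  rw [this]

theorem M1_node_erase (ts : List RTree) (x : ℝ) (i : ℕ) (h : i < ts.length) :
    M1 (node ts) x = x * M0 (ts.get ⟨i, h⟩) x * M0 (node (ts.eraseIdx i)) x
      + M (ts.get ⟨i, h⟩) x * M1 (node (ts.eraseIdx i)) x := by
  have h' : i < (ts.map fun t => (M0 t x, M t x)).length := by simpa using h
  have := (comb_eraseIdx (ts.map fun t => (M0 t x, M t x)) i h').2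
  simp only [M1_node, M0_node, List.get_eq_getElem, List.getElem_map, map_eraseIdx] at this ⊢
  rw [this]; ring

/-! ### listModify lemmas -/

theorem length_listModify {α : Type*} (f : α → α) (n : ℕ) (l : List α) :
    (listModify f n l).length = l.length := by
  induction l generalizing n with
  | nil => cases n <;> rfl
  | cons a l ih =>
    cases n with
    | zero => rfl
    | succ m => simp only [listModify, List.length_cons, ih]

theorem get_listModify_self {α : Type*} (f : α → α) (n : ℕ) (l : List α)
    (h : n < l.length) (h' : n < (listModify f n l).length) :
    (listModify f n l).get ⟨n, h'⟩ = f (l.get ⟨n, h⟩) := by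
  induction l generalizing n with
  | nil => simp at h
  | cons a l ih =>
    cases n with
    | zero => rfl
    | succ m =>
      simp only [listModify, List.get_cons_succ]
      exact ih m (by simpa using h) (by simpa [listModify] using h')

theorem eraseIdx_listModify {α : Type*} (f : α → α) (n : ℕ) (l : List α) :
    (listModify f n l).eraseIdx n = l.eraseIdx n := by
  induction l generalizing n with
  | nil => cases n <;> rfl
  | cons a l ih =>
    cases n with
    | zero => rfl
    | succ m => simp only [listModify, List.eraseIdx_cons_succ, ih]

theorem map_listModify {α β : Type*} (m : α → β) (f : α → α) (g : β → β)
    (n : ℕ) (l : List α) (h : n < l.length)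
    (hc : m (f (l.get ⟨n, h⟩)) = g (m (l.get ⟨n, h⟩))) :
    (listModify f n l).map m = listModify g n (l.map m) := by
  induction l generalizing n with
  | nil => simp at h
  | cons a l ih =>
    cases n with
    | zero => simpa [listModify] using hc
    | succ m' =>
      simp only [listModify, List.map_cons]
      rw [ih m' (by simpa using h) hc]

/-! ### MM2 unfolding -/

theorem MM2_cons (i : ℕ) (p : List ℕ) (ts : List RTree) (x : ℝ) (h : i < ts.length) :
    MM2 (i :: p) (node ts) x =
      ((M0 (node (ts.eraseIdx i)) x * ((MM2 p (ts.get ⟨i, h⟩) x).1.1 + (MM2 p (ts.get ⟨i, h⟩) x).2.1),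
        M0 (node (ts.eraseIdx i)) x * ((MM2 p (ts.get ⟨i, h⟩) x).1.2 + (MM2 p (ts.get ⟨i, h⟩) x).2.2)),
       (x * M0 (node (ts.eraseIdx i)) x * (MM2 p (ts.get ⟨i, h⟩) x).1.1
          + M1 (node (ts.eraseIdx i)) x * ((MM2 p (ts.get ⟨i, h⟩) x).1.1 + (MM2 p (ts.get ⟨i, h⟩) x).2.1),
        x * M0 (node (ts.eraseIdx i)) x * (MM2 p (ts.get ⟨i, h⟩) x).1.2
          + M1 (node (ts.eraseIdx i)) x * ((MM2 p (ts.get ⟨i, h⟩) x).1.2 + (MM2 p (ts.get ⟨i, h⟩) x).2.2))) := by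
  rw [MM2, dif_pos h]

/-- Companion vector to `MM2`: starts from `(0, M0 v)` at the marked vertex and is
propagated up by the same linear transformation as the columns of `MM2`. -/
noncomputable def MME : List ℕ → RTree → ℝ → ℝ × ℝ
  | [], t, x => (0, M0 t x)
  | i :: p, .node ts, x =>
    if h : i < ts.length then
      let e := MME p (ts.get ⟨i, h⟩) x
      let os : RTree := .node (ts.eraseIdx i)
      (M0 os x * (e.1 + e.2), x * M0 os x * e.1 + M1 os x * (e.1 + e.2))
    else (0, 0)

theorem MME_cons (i : ℕ) (p : List ℕ) (ts : List RTree) (x : ℝ) (h : i < ts.length) :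
    MME (i :: p) (node ts) x =
      (M0 (node (ts.eraseIdx i)) x * ((MME p (ts.get ⟨i, h⟩) x).1 + (MME p (ts.get ⟨i, h⟩) x).2),
        x * M0 (node (ts.eraseIdx i)) x * (MME p (ts.get ⟨i, h⟩) x).1
          + M1 (node (ts.eraseIdx i)) x * ((MME p (ts.get ⟨i, h⟩) x).1 + (MME p (ts.get ⟨i, h⟩) x).2)) := by
  rw [MME, dif_pos h]

/-! ### Nonnegativity and the key inequality -/

theorem MM2_nonneg {x : ℝ} (hx : 0 < x) : ∀ (p : List ℕ) (t : RTree),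
    0 ≤ (MM2 p t x).1.1 ∧ 0 ≤ (MM2 p t x).1.2 ∧ 0 ≤ (MM2 p t x).2.1 ∧ 0 ≤ (MM2 p t x).2.2
  | [], t => by
    simp only [MM2]
    exact ⟨(M0_pos hx t).le, le_refl 0, le_refl 0, M1_nonneg hx t⟩
  | i :: p, node ts => by
    by_cases h : i < ts.length
    · obtain ⟨h1, h2, h3, h4⟩ := MM2_nonneg hx p (ts.get ⟨i, h⟩)
      rw [MM2_cons i p ts x h]
      have hP0 := (M0_pos hx (node (ts.eraseIdx i))).le
      have hP1 := M1_nonneg hx (node (ts.eraseIdx i))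
      refine ⟨mul_nonneg hP0 (by linarith), mul_nonneg hP0 (by linarith),
        add_nonneg (mul_nonneg (mul_nonneg hx.le hP0) h1) (mul_nonneg hP1 (by linarith)),
        add_nonneg (mul_nonneg (mul_nonneg hx.le hP0) h2) (mul_nonneg hP1 (by linarith))⟩
    · rw [MM2, dif_neg h]
      norm_num

theorem MME_nonneg {x : ℝ} (hx : 0 < x) : ∀ (p : List ℕ) (t : RTree),
    0 ≤ (MME p t x).1 ∧ 0 ≤ (MME p t x).2
  | [], t => by
    simp only [MME]
    exact ⟨le_refl 0, (M0_pos hx t).le⟩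
  | i :: p, node ts => by
    by_cases h : i < ts.length
    · obtain ⟨h1, h2⟩ := MME_nonneg hx p (ts.get ⟨i, h⟩)
      rw [MME_cons i p ts x h]
      have hP0 := (M0_pos hx (node (ts.eraseIdx i))).le
      have hP1 := M1_nonneg hx (node (ts.eraseIdx i))
      exact ⟨mul_nonneg hP0 (by linarith),
        add_nonneg (mul_nonneg (mul_nonneg hx.le hP0) h1) (mul_nonneg hP1 (by linarith))⟩
    · rw [MME, dif_neg h]
      norm_num

theorem MME_le_MM2 {x : ℝ} (hx : 0 < x) : ∀ (p : List ℕ) (t : RTree),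
    (MME p t x).1 ≤ (MM2 p t x).1.1 ∧
    (MME p t x).1 + (MME p t x).2 ≤ (MM2 p t x).1.1 + (MM2 p t x).2.1
  | [], t => by
    simp only [MME, MM2]
    exact ⟨(M0_pos hx t).le, by linarith⟩
  | i :: p, node ts => by
    by_cases h : i < ts.length
    · obtain ⟨h1, h2⟩ := MME_le_MM2 hx p (ts.get ⟨i, h⟩)
      obtain ⟨he1, he2⟩ := MME_nonneg hx p (ts.get ⟨i, h⟩)
      rw [MME_cons i p ts x h, MM2_cons i p ts x h]
      dsimp only
      have hP0 := (M0_pos hx (node (ts.eraseIdx i))).le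
      have hP1 := M1_nonneg hx (node (ts.eraseIdx i))
      have k1 := mul_le_mul_of_nonneg_left h2 hP0
      have k2 := mul_le_mul_of_nonneg_left h2 hP1
      have k3 := mul_le_mul_of_nonneg_left h1 (mul_nonneg hx.le hP0)
      constructor
      · nlinarith [k1]
      · nlinarith [k1, k2, k3]
    · rw [MME, MM2, dif_neg h, dif_neg h]
      norm_num

/-! ### Row sums of MM2 -/

theorem MM2_rowsum : ∀ (x : ℝ) (p : List ℕ) (t : RTree), ValidPos p t →
    (MM2 p t x).1.1 + (MM2 p t x).1.2 = M0 t x ∧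
    (MM2 p t x).2.1 + (MM2 p t x).2.2 = M1 t x
  | x, [], t, _ => by simp [MM2]
  | x, i :: p, node ts, hv => by
    obtain ⟨h, hv'⟩ := hv
    obtain ⟨h1, h2⟩ := MM2_rowsum x p (ts.get ⟨i, h⟩) hv'
    rw [MM2_cons i p ts x h]
    dsimp only
    constructor
    · rw [M0_node_erase ts x i h]
      simp only [M]
      rw [← h1, ← h2]
      ring
    · rw [M1_node_erase ts x i h]
      simp only [M]
      rw [← h1, ← h2]
      ring

theorem M_eq_MM2_sum {x : ℝ} (p : List ℕ) (t : RTree) (hv : ValidPos p t) :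
    M t x = (MM2 p t x).1.1 + (MM2 p t x).1.2 + (MM2 p t x).2.1 + (MM2 p t x).2.2 := by
  obtain ⟨h1, h2⟩ := MM2_rowsum x p t hv
  simp only [M]
  linarith

/-! ### Validity preservation -/

theorem valid_modifyAt (f : RTree → RTree) : ∀ (p : List ℕ) (t : RTree), ValidPos p t →
    ValidPos p (modifyAt f p t)
  | [], t, _ => trivial
  | i :: p, node ts, hv => by
    obtain ⟨h, hv'⟩ := hv
    have hl : i < (listModify (modifyAt f p) i ts).length := by
      rw [length_listModify]; exact h
    refine ⟨hl, ?_⟩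
    rw [get_listModify_self (modifyAt f p) i ts h hl]
    exact valid_modifyAt f p (ts.get ⟨i, h⟩) hv'

theorem valid_attachB (bs : List RTree) : ∀ (p : List ℕ) (t : RTree), ValidPos p t →
    ValidPos p (attachB t bs)
  | [], _, _ => trivial
  | i :: p, node ts, hv => by
    obtain ⟨h, hv'⟩ := hv
    have hl : i < (ts ++ bs).length := by
      simp only [List.length_append]; omega
    refine ⟨hl, ?_⟩
    have : (ts ++ bs).get ⟨i, hl⟩ = ts.get ⟨i, h⟩ := by
      simp [List.getElem_append_left h]
    rw [this]
    exact hv'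

theorem valid_subdivPos : ∀ (p : List ℕ) (t : RTree), ValidPos p t →
    ValidPos (subdivPos p) (subdiv t)
  | [], t, _ => trivial
  | i :: p, node ts, hv => by
    obtain ⟨h, hv'⟩ := hv
    rw [subdiv_node]
    have hl : i < (ts.map fun t => node [subdiv t]).length := by
      simpa using h
    refine ⟨hl, ?_⟩
    have : (ts.map fun t => node [subdiv t]).get ⟨i, hl⟩ = node [subdiv (ts.get ⟨i, h⟩)] := by
      simp
    rw [this]
    exact ⟨by norm_num, valid_subdivPos p (ts.get ⟨i, h⟩) hv'⟩

/-! ### Lemma A: attaching branches at the marked vertex -/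

theorem MM2_modify : ∀ (x : ℝ) (Cs : List RTree) (p : List ℕ) (t : RTree), ValidPos p t →
    MM2 p (modifyAt (fun s => attachB s Cs) p t) x =
      (((MM2 p t x).1.1 * PP Cs x,
        (MM2 p t x).1.2 * PP Cs x + (MME p t x).1 * (x * QQ Cs x)),
       ((MM2 p t x).2.1 * PP Cs x,
        (MM2 p t x).2.2 * PP Cs x + (MME p t x).2 * (x * QQ Cs x)))
  | x, Cs, [], node ts, _ => by
    simp only [modifyAt, attachB, MM2, MME]
    rw [M0_node_append, M1_node_append]
    refine Prod.ext (Prod.ext ?_ ?_) (Prod.ext ?_ ?_) <;> simp <;> ring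
  | x, Cs, i :: p, node ts, hv => by
    obtain ⟨h, hv'⟩ := hv
    have ih := MM2_modify x Cs p (ts.get ⟨i, h⟩) hv'
    simp only [modifyAt]
    have hl : i < (listModify (modifyAt (fun s => attachB s Cs) p) i ts).length := by
      rw [length_listModify]; exact h
    rw [MM2_cons i p _ x hl, get_listModify_self _ i ts h hl,
      eraseIdx_listModify, ih, MM2_cons i p ts x h, MME_cons i p ts x h]
    refine Prod.ext (Prod.ext ?_ ?_) (Prod.ext ?_ ?_) <;> simp <;> ring

/-! ### Lemma B: attaching branches at the root -/

theorem M_attachB {x : ℝ} (Bs : List RTree) (p : List ℕ) (t : RTree) (hv : ValidPos p t) :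
    M (attachB t Bs) x = M t x * PP Bs x
      + ((MM2 p t x).1.1 + (MM2 p t x).1.2) * (x * QQ Bs x) := by
  obtain ⟨ts⟩ := t
  obtain ⟨h1, _⟩ := MM2_rowsum x p (node ts) hv
  simp only [attachB, M]
  rw [M0_node_append, M1_node_append, h1]
  ring

/-! ### Subdivision commutation -/

theorem subdiv_attachB (t : RTree) (bs : List RTree) :
    subdiv (attachB t bs) = attachB (subdiv t) (bs.map fun b => node [subdiv b]) := by
  obtain ⟨ts⟩ := t
  simp only [attachB, subdiv_node, List.map_append]

theorem subdiv_modifyAt (Cs : List RTree) : ∀ (p : List ℕ) (t : RTree), ValidPos p t →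
    subdiv (modifyAt (fun s => attachB s Cs) p t) =
      modifyAt (fun s => attachB s (Cs.map fun b => node [subdiv b])) (subdivPos p) (subdiv t)
  | [], t, _ => by
    simp only [modifyAt, subdivPos, List.flatMap_nil]
    exact subdiv_attachB t Cs
  | i :: p, node ts, hv => by
    obtain ⟨h, hv'⟩ := hv
    have hsp : subdivPos (i :: p) = i :: 0 :: subdivPos p := by
      simp [subdivPos]
    rw [hsp]
    simp only [modifyAt, subdiv_node]
    rw [map_listModify (fun t => node [subdiv t])
      (modifyAt (fun s => attachB s Cs) p)
      (modifyAt (fun s => attachB s (Cs.map fun b => node [subdiv b])) (0 :: subdivPos p))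
      i ts h ?_]
    show node [subdiv (modifyAt (fun s => attachB s Cs) p (ts.get ⟨i, h⟩))] = _
    rw [subdiv_modifyAt Cs p (ts.get ⟨i, h⟩) hv']
    rfl

/-! ### PP/QQ as products and sums -/

theorem PP_prod (x : ℝ) : ∀ l : List RTree, PP l x = (l.map fun b => M b x).prod
  | [] => by simp [PP, comb]
  | b :: l => by
    simp only [PP, List.map_cons, comb_cons, List.prod_cons]
    exact congrArg _ (PP_prod x l)

theorem QQ_sum {x : ℝ} (hx : 0 < x) : ∀ l : List RTree,
    x * QQ l x = PP l x * (l.map fun b => x * M0 b x / M b x).sum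
  | [] => by simp [QQ, PP, comb]
  | b :: l => by
    have hM := (Mt_pos hx b).ne'
    simp only [QQ, PP, List.map_cons, comb_cons, List.sum_cons]
    have ihq := QQ_sum hx l
    simp only [QQ, PP] at ihq
    field_simp
    linear_combination (M b x) * ihq

/-! ### Multiset rearrangement lemma -/

theorem multiset_sum_le : ∀ (P : Multiset ℝ), ∀ (Q : Multiset ℝ), P.card ≤ Q.card →
    (∀ a ∈ P, ∀ b ∈ Q, a ≤ b) → (∀ b ∈ Q, 0 ≤ b) → P.sum ≤ Q.sum := by
  intro P
  induction P using Multiset.induction with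
  | empty => intro Q _ _ hQ; simpa using Multiset.sum_nonneg hQ
  | cons a P ih =>
    intro Q hcard hle hQ
    have hQne : Q ≠ 0 := by
      intro h; rw [h] at hcard; simp at hcard
    obtain ⟨b, hb⟩ := Multiset.exists_mem_of_ne_zero hQne
    have hQ' : Q = b ::ₘ Q.erase b := (Multiset.cons_erase hb).symm
    rw [Multiset.sum_cons, hQ', Multiset.sum_cons]
    have h1 : a ≤ b := hle a (by simp) b hb
    have h2 : P.sum ≤ (Q.erase b).sum := by
      apply ih
      · have := Multiset.card_erase_of_mem hb
        rw [this]
        rw [hQ'] at hcard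
        simp at hcard
        omega
      · intro a' ha' b' hb'
        exact hle a' (by simp [ha']) b' (Multiset.mem_of_mem_erase hb')
      · intro b' hb'
        exact hQ b' (Multiset.mem_of_mem_erase hb')
    linarith

theorem sub_multiset_sum_le (T B S : Multiset ℝ) (hS : S ≤ T) (hB : B ≤ T)
    (hcard : S.card ≤ B.card)
    (hle : ∀ a ∈ T - B, ∀ b ∈ B, a ≤ b) (hpos : ∀ b ∈ B, 0 ≤ b) :
    S.sum ≤ B.sum := by
  have hSB : S - B + S ∩ B = S := Multiset.sub_add_inter S B
  have hBS : B - S + B ∩ S = B := Multiset.sub_add_inter B S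
  have hinter : S ∩ B = B ∩ S := Multiset.inter_comm S B
  have hkey : (S - B).sum ≤ (B - S).sum := by
    apply multiset_sum_le
    · have c1 : (S - B).card + (S ∩ B).card = S.card := by
        rw [← Multiset.card_add, hSB]
      have c2 : (B - S).card + (B ∩ S).card = B.card := by
        rw [← Multiset.card_add, hBS]
      rw [hinter] at c1
      omega
    · intro a ha b hb
      have haT : a ∈ T - B := by
        have : S - B ≤ T - B := tsub_le_tsub_right hS B
        exact Multiset.mem_of_le this ha
      have hbB : b ∈ B := Multiset.mem_of_le (Multiset.sub_le_self B S) hb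
      exact hle a haT b hbB
    · intro b hb
      exact hpos b (Multiset.mem_of_le (Multiset.sub_le_self B S) hb)
  calc S.sum = (S - B).sum + (S ∩ B).sum := by rw [← Multiset.sum_add, hSB]
    _ ≤ (B - S).sum + (B ∩ S).sum := by rw [hinter]; linarith
    _ = B.sum := by rw [← Multiset.sum_add, hBS]

end RTree


namespace RTree

theorem M0_wrap (s : RTree) (x : ℝ) : M0 (node [s]) x = M s x := by
  simp [M0_node, comb_cons, comb]

theorem M1_wrap (s : RTree) (x : ℝ) : M1 (node [s]) x = x * M0 s x := by
  simp [M1_node, comb_cons, comb]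

/-- The master formula: the matching generating function of the assembled
subdivided tree. -/
theorem master {x : ℝ} (hx : 0 < x) (T₀ : RTree) (pv : List ℕ) (hpv : ValidPos pv T₀)
    (Ls Rs : List RTree) :
    M (subdiv (attachB (modifyAt (fun s => attachB s Rs) pv T₀) Ls)) x =
      ((Ls.map fun a => M (node [subdiv a]) x).prod
          * (Rs.map fun a => M (node [subdiv a]) x).prod)
        * ((((MM2 (subdivPos pv) (subdiv T₀) x).1.1 + (MM2 (subdivPos pv) (subdiv T₀) x).1.2)
              + ((MM2 (subdivPos pv) (subdiv T₀) x).2.1 + (MM2 (subdivPos pv) (subdiv T₀) x).2.2))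
          + ((MM2 (subdivPos pv) (subdiv T₀) x).1.1 + (MM2 (subdivPos pv) (subdiv T₀) x).1.2)
              * (Ls.map fun a => x * M0 (node [subdiv a]) x / M (node [subdiv a]) x).sum
          + ((MME (subdivPos pv) (subdiv T₀) x).1 + (MME (subdivPos pv) (subdiv T₀) x).2)
              * (Rs.map fun a => x * M0 (node [subdiv a]) x / M (node [subdiv a]) x).sum
          + (MME (subdivPos pv) (subdiv T₀) x).1
              * ((Ls.map fun a => x * M0 (node [subdiv a]) x / M (node [subdiv a]) x).sum
                  * (Rs.map fun a => x * M0 (node [subdiv a]) x / M (node [subdiv a]) x).sum)) := by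
  have hvU := valid_subdivPos pv T₀ hpv
  have hvV := valid_modifyAt
    (fun s => attachB s (Rs.map fun b => node [subdiv b])) (subdivPos pv) (subdiv T₀) hvU
  rw [subdiv_attachB, subdiv_modifyAt Rs pv T₀ hpv,
    M_attachB (Ls.map fun b => node [subdiv b]) (subdivPos pv) _ hvV,
    M_eq_MM2_sum (subdivPos pv) _ hvV,
    MM2_modify x (Rs.map fun b => node [subdiv b]) (subdivPos pv) (subdiv T₀) hvU]
  dsimp only
  rw [QQ_sum hx (Rs.map fun b => node [subdiv b]), QQ_sum hx (Ls.map fun b => node [subdiv b]),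
    PP_prod x (Rs.map fun b => node [subdiv b]), PP_prod x (Ls.map fun b => node [subdiv b])]
  simp only [List.map_map, Function.comp_def, div_eq_mul_inv]
  ring

theorem phi_nonneg {x : ℝ} (hx : 0 < x) (a : RTree) :
    0 ≤ x * M0 (node [subdiv a]) x / M (node [subdiv a]) x :=
  div_nonneg (mul_nonneg hx.le (M0_pos hx _).le) (Mt_pos hx _).le

theorem phi_mono {x : ℝ} (hx : 0 < x) (a b : RTree)
    (h : tau (subdiv b) x ≤ tau (subdiv a) x) :
    x * M0 (node [subdiv a]) x / M (node [subdiv a]) x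
      ≤ x * M0 (node [subdiv b]) x / M (node [subdiv b]) x := by
  have hA0 := M0_pos hx (subdiv a)
  have hB0 := M0_pos hx (subdiv b)
  have hA := Mt_pos hx (subdiv a)
  have hB := Mt_pos hx (subdiv b)
  have hWA := Mt_pos hx (node [subdiv a])
  have hWB := Mt_pos hx (node [subdiv b])
  have htau : M0 (subdiv b) x * M (subdiv a) x ≤ M0 (subdiv a) x * M (subdiv b) x := by
    rw [tau, tau, div_le_div_iff₀ hB hA] at h
    linarith
  rw [div_le_div_iff₀ hWA hWB]
  have eA : M (node [subdiv a]) x = M (subdiv a) x + x * M0 (subdiv a) x := by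
    rw [M, M0_wrap, M1_wrap]
  have eB : M (node [subdiv b]) x = M (subdiv b) x + x * M0 (subdiv b) x := by
    rw [M, M0_wrap, M1_wrap]
  rw [M0_wrap, M0_wrap, eA, eB]
  nlinarith [mul_le_mul_of_nonneg_left htau (mul_nonneg hx.le hx.le), hA0, hB0, hA, hB, hx]

theorem final_ineq (A E e1 Sq a b b' Pi : ℝ) (he1 : 0 ≤ e1) (hAE : E ≤ A)
    (hb : b ≤ b') (ha : a ≤ b') (hPi : 0 ≤ Pi) :
    Pi * (Sq + A * (a + b - b') + E * b' + e1 * ((a + b - b') * b'))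
      ≤ Pi * (Sq + A * a + E * b + e1 * (a * b)) := by
  apply mul_le_mul_of_nonneg_left _ hPi
  nlinarith [mul_nonneg (sub_nonneg.2 hAE) (sub_nonneg.2 hb),
    mul_nonneg he1 (mul_nonneg (sub_nonneg.2 hb) (sub_nonneg.2 ha))]

end RTree


namespace RTree

theorem sums_le {x : ℝ} (hx : 0 < x) (d : ℕ) (Ls Rs Ls' Rs' : List RTree)
    (hd1 : Ls.length ≤ d) (hd2 : Rs.length ≤ d)
    (hperm : (Ls' ++ Rs').Perm (Ls ++ Rs))
    (hlen : Rs'.length = min d (Ls.length + Rs.length))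
    (hsorted : ((Ls' ++ Rs').map fun t => tau (subdiv t) x).Pairwise (· ≥ ·)) :
    ((Rs.map fun a => x * M0 (node [subdiv a]) x / M (node [subdiv a]) x).sum
        ≤ (Rs'.map fun a => x * M0 (node [subdiv a]) x / M (node [subdiv a]) x).sum)
    ∧ ((Ls.map fun a => x * M0 (node [subdiv a]) x / M (node [subdiv a]) x).sum
        ≤ (Rs'.map fun a => x * M0 (node [subdiv a]) x / M (node [subdiv a]) x).sum) := by
  set φ : RTree → ℝ := fun a => x * M0 (node [subdiv a]) x / M (node [subdiv a]) x with hφ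
  have hpair : ∀ u ∈ Ls'.map φ, ∀ v ∈ Rs'.map φ, u ≤ v := by
    intro u hu v hv
    rw [List.mem_map] at hu hv
    obtain ⟨a, ha, rfl⟩ := hu
    obtain ⟨b, hb, rfl⟩ := hv
    apply phi_mono hx
    have h := hsorted
    rw [List.map_append] at h
    exact (List.pairwise_append.mp h).2.2 _ (List.mem_map_of_mem ha) _
      (List.mem_map_of_mem hb)
  have hpos : ∀ v ∈ Rs'.map φ, 0 ≤ v := by
    intro v hv
    rw [List.mem_map] at hv
    obtain ⟨b, _, rfl⟩ := hv
    exact phi_nonneg hx b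
  have hcoe : (↑(Ls.map φ) + ↑(Rs.map φ) : Multiset ℝ) = ↑(Ls'.map φ) + ↑(Rs'.map φ) := by
    rw [Multiset.coe_add, Multiset.coe_add]
    apply Multiset.coe_eq_coe.mpr
    rw [← List.map_append, ← List.map_append]
    exact (hperm.map φ).symm
  have hlemma : ∀ S : List ℝ, (↑S : Multiset ℝ) ≤ ↑(Ls.map φ) + ↑(Rs.map φ) →
      S.length ≤ Rs'.length → S.sum ≤ (Rs'.map φ).sum := by
    intro S hS hcard
    have key := sub_multiset_sum_le (↑(Ls'.map φ) + ↑(Rs'.map φ)) ↑(Rs'.map φ) ↑S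
      (by rw [← hcoe]; exact hS) le_add_self
      (by simpa using hcard)
      (by
        rw [add_tsub_cancel_right]
        intro a ha b hb
        exact hpair a (by simpa using ha) b (by simpa using hb))
      (by intro b hb; exact hpos b (by simpa using hb))
    simpa using key
  constructor
  · apply hlemma
    · exact le_add_self
    · rw [hlen, List.length_map]
      exact le_min hd2 (Nat.le_add_left _ _)
  · apply hlemma
    · exact le_add_right le_rfl
    · rw [hlen, List.length_map]
      exact le_min hd1 (Nat.le_add_right _ _)

end RTree

open RTree in
/-- Theorem 2.5 (the exchange theorem).  `T₀` is a tree rooted at `u` with a second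
marked vertex `v` at position `pv`; `T` is obtained by attaching the branches
`Ls` at `u` and `Rs` at `v`, and `T'` by attaching the rearranged branches
`Ls'` at `u` and `Rs'` at `v`, where `Ls' ++ Rs'` is a permutation of
`Ls ++ Rs` sorted so that the values `τ(S(·),x)` are non-increasing and
`Rs'` consists of the `min d (|Ls|+|Rs|)` branches with smallest `τ(S(·),x)`.
If `M₁₀(S(T₀),x) ≤ M₀₁(S(T₀),x)` then `M(S(T),x) ≥ M(S(T'),x)`. -/
theorem exchange_theorem (x : ℝ) (hx : 0 < x) (d : ℕ)
    (T₀ : RTree) (pv : List ℕ) (hpv : ValidPos pv T₀) (hne : pv ≠ [])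
    (Ls Rs Ls' Rs' : List RTree)
    (hd1 : Ls.length ≤ d) (hd2 : Rs.length ≤ d)
    (hperm : (Ls' ++ Rs').Perm (Ls ++ Rs))
    (hlen : Rs'.length = min d (Ls.length + Rs.length))
    (hsorted : ((Ls' ++ Rs').map fun t => tau (subdiv t) x).Pairwise (· ≥ ·))
    (hM : (MM2 (subdivPos pv) (subdiv T₀) x).2.1 ≤
      (MM2 (subdivPos pv) (subdiv T₀) x).1.2) :
    M (subdiv (attachB (modifyAt (fun s => attachB s Rs') pv T₀) Ls')) x ≤
      M (subdiv (attachB (modifyAt (fun s => attachB s Rs) pv T₀) Ls)) x := by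
  obtain ⟨hbb, haa⟩ := sums_le hx d Ls Rs Ls' Rs' hd1 hd2 hperm hlen hsorted
  rw [master hx T₀ pv hpv Ls' Rs', master hx T₀ pv hpv Ls Rs]
  have he1 : 0 ≤ (MME (subdivPos pv) (subdiv T₀) x).1 :=
    (MME_nonneg hx (subdivPos pv) (subdiv T₀)).1
  have hAE : (MME (subdivPos pv) (subdiv T₀) x).1 + (MME (subdivPos pv) (subdiv T₀) x).2 ≤
      (MM2 (subdivPos pv) (subdiv T₀) x).1.1 + (MM2 (subdivPos pv) (subdiv T₀) x).1.2 := by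
    have h2 := (MME_le_MM2 hx (subdivPos pv) (subdiv T₀)).2
    linarith
  have hprod : ((Ls'.map fun a => M (node [subdiv a]) x).prod
        * (Rs'.map fun a => M (node [subdiv a]) x).prod)
      = ((Ls.map fun a => M (node [subdiv a]) x).prod
        * (Rs.map fun a => M (node [subdiv a]) x).prod) := by
    have h := (hperm.map fun a => M (node [subdiv a]) x).prod_eq
    simpa [List.map_append, List.prod_append] using h
  have hsum : (Ls'.map fun a => x * M0 (node [subdiv a]) x / M (node [subdiv a]) x).sum
      = (Ls.map fun a => x * M0 (node [subdiv a]) x / M (node [subdiv a]) x).sum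
        + (Rs.map fun a => x * M0 (node [subdiv a]) x / M (node [subdiv a]) x).sum
        - (Rs'.map fun a => x * M0 (node [subdiv a]) x / M (node [subdiv a]) x).sum := by
    have h := (hperm.map fun a => x * M0 (node [subdiv a]) x / M (node [subdiv a]) x).sum_eq
    simp only [List.map_append, List.sum_append] at h
    linarith
  have hPi : 0 ≤ ((Ls.map fun a => M (node [subdiv a]) x).prod
      * (Rs.map fun a => M (node [subdiv a]) x).prod) := by
    apply mul_nonneg <;>
    · apply List.prod_nonneg
      intro b hb
      rw [List.mem_map] at hb
      obtain ⟨a, _, rfl⟩ := hb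
      exact (Mt_pos hx _).le
  rw [hprod, hsum]
  exact final_ineq _ _ _ _ _ _ _ _ he1 hAE hbb haa hPi
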